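/- Energy decay for the Galerkin (finite element) scheme (Corollary 5.1): assume time-independent data ℓ ∈ X' and g_h ∈ X with e(g_h) ∈ Ψ_h, and let (u_h^k, φ_h^k) ∈ (g_h + V_h) × Ψ_h, k = 0, …, N, be the solution of the discrete scheme. Then the discrete energies E_h^k := E(u_h^k, φ_h^k) satisfy E_h^k ≤ E_h^{k−1} for all k = 1, …, N. -/
import Mathlib


open scoped RealInnerProductSpace

/-- Energy decay for the Galerkin (finite element) scheme (Corollary 5.1):
for the solution of the discrete scheme with time-independent data, the discrete
energies `E_hᵏ := E(u_hᵏ, φ_hᵏ)` are monotone nonincreasing. -/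
theorem stmt_15
    {X Ψ : Type*}
    [NormedAddCommGroup X] [InnerProductSpace ℝ X] [CompleteSpace X]
    [NormedAddCommGroup Ψ] [InnerProductSpace ℝ Ψ] [CompleteSpace Ψ]
    (V : Submodule ℝ X) (hV : IsClosed (V : Set X))
    (e : X →L[ℝ] Ψ) (C : Ψ →L[ℝ] Ψ)
    (hCsym : ∀ φ ψ : Ψ, ⟪C φ, ψ⟫ = ⟪φ, C ψ⟫)
    (cstar : ℝ) (hcstar : 0 < cstar)
    (hCcoer : ∀ ψ : Ψ, cstar * ‖ψ‖ ^ 2 ≤ ⟪C ψ, ψ⟫)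
    (c₀ : ℝ) (hc₀ : 0 < c₀)
    (hacoer : ∀ v ∈ V, c₀ * ‖v‖ ^ 2 ≤ ⟪C (e v), e v⟫)
    (η α : ℝ) (hη : 0 < η) (hα : 0 ≤ α)
    (Vh : Submodule ℝ X) (hVhV : Vh ≤ V) (hVh : IsClosed (Vh : Set X))
    (Ψh : Submodule ℝ Ψ) (hΨh : IsClosed (Ψh : Set Ψ))
    (he_h : ∀ v ∈ Vh, e v ∈ Ψh)
    (hC_h : ∀ ψ ∈ Ψh, C ψ ∈ Ψh)
    (τ : ℝ) (hτ : 0 < τ) (N : ℕ)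
    (ℓ : X →L[ℝ] ℝ) (gh : X) (hgh : e gh ∈ Ψh)
    (E : X → Ψ → ℝ)
    (hE : ∀ u φ, E u φ =
      (1 / 2) * ⟪C (e u - φ), e u - φ⟫ + (α / 2) * ‖φ‖ ^ 2 - ℓ u)
    (u : ℕ → X) (φ : ℕ → Ψ)
    (hmem : ∀ k ≤ N, u k - gh ∈ Vh)
    (hφmem : ∀ k ≤ N, φ k ∈ Ψh)
    (heq1 : ∀ k ≤ N, ∀ v ∈ Vh, ⟪C (e (u k) - φ k), e v⟫ = ℓ v)
    (heq2 : ∀ k, 1 ≤ k → k ≤ N →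
      (η / τ) • (φ k - φ (k - 1)) + α • φ k - C (e (u k) - φ k) = 0) :
    ∀ k, 1 ≤ k → k ≤ N → E (u k) (φ k) ≤ E (u (k - 1)) (φ (k - 1)) := by
  intro k hk1 hkN
  have hk1N : k - 1 ≤ N := le_trans (Nat.sub_le k 1) hkN
  have hsymB : ∀ x y : Ψ, ⟪C x, y⟫ = ⟪C y, x⟫ := fun x y => by
    rw [hCsym, real_inner_comm]
  set a := e (u k) - φ k with ha
  set b := e (u (k-1)) - φ (k-1) with hb
  set δ := φ k - φ (k-1) with hδ
  -- discrete flow rule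
  have h2 : C a = (η / τ) • δ + α • φ k := (sub_eq_zero.mp (heq2 k hk1 hkN)).symm
  -- Galerkin orthogonality at step k applied to the increment
  have hv : u k - u (k-1) ∈ Vh := by
    have := Vh.sub_mem (hmem k hkN) (hmem (k-1) hk1N)
    simpa [sub_sub_sub_cancel_right] using this
  have h1 := heq1 k hkN _ hv
  have s3 : ℓ (u k) - ℓ (u (k-1)) = ⟪C a, e (u k) - e (u (k-1))⟫ := by
    rw [← map_sub ℓ, ← map_sub e]; exact h1.symm
  have s1 : ⟪C a, a⟫ - ⟪C b, b⟫ = 2 * ⟪C a, a - b⟫ - ⟪C (a - b), a - b⟫ := by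
    simp only [map_sub, inner_sub_left, inner_sub_right]
    linarith [hsymB a b]
  have s2 : (α/2) * ‖φ k‖ ^ 2 - (α/2) * ‖φ (k-1)‖ ^ 2
      = α * ⟪φ k, δ⟫ - (α/2) * ‖δ‖ ^ 2 := by
    have h : ‖φ k‖ ^ 2 - ‖φ (k-1)‖ ^ 2 = 2 * ⟪φ k, δ⟫ - ‖δ‖ ^ 2 := by
      rw [← real_inner_self_eq_norm_sq, ← real_inner_self_eq_norm_sq,
        ← real_inner_self_eq_norm_sq]
      simp only [hδ, inner_sub_left, inner_sub_right]
      linarith [real_inner_comm (φ k) (φ (k-1))]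
    linear_combination (α/2) * h
  have hab : a - b = (e (u k) - e (u (k-1))) - δ := by
    rw [ha, hb, hδ]; abel
  have s4 : ⟪C a, a - b⟫ = ⟪C a, e (u k) - e (u (k-1))⟫ - ⟪C a, δ⟫ := by
    rw [hab, inner_sub_right]
  have s5 : ⟪C a, δ⟫ = (η / τ) * ‖δ‖ ^ 2 + α * ⟪φ k, δ⟫ := by
    rw [h2, inner_add_left, real_inner_smul_left, real_inner_smul_left,
      real_inner_self_eq_norm_sq]
  have hQ : (0:ℝ) ≤ ⟪C (a - b), a - b⟫ :=
    le_trans (mul_nonneg hcstar.le (sq_nonneg _)) (hCcoer _)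
  have hR : (0:ℝ) ≤ (η / τ) * ‖δ‖ ^ 2 :=
    mul_nonneg (div_nonneg hη.le hτ.le) (sq_nonneg _)
  have hS : (0:ℝ) ≤ (α/2) * ‖δ‖ ^ 2 :=
    mul_nonneg (by linarith) (sq_nonneg _)
  rw [hE, hE]
  linarith [s1, s2, s3, s4, s5, hQ, hR, hS]
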